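/- Let the rooted forest class F° consist of forests on [n] with a root chosen in each component, and let R°_n be sampled with probability proportional to τ(F) = λ^{e(F)}·ν^{κ(F)}. Then P(κ(R°_n) = k+1) = ((n−k)/n)·(ν/(λk))·P(κ(R°_n) = k) for each k ≥ 1. -/

import Mathlib

open scoped Classical

/-- Number of connected components of a graph. -/
noncomputable def kappa {V : Type*} (G : SimpleGraph V) : ℕ :=
  Nat.card G.ConnectedComponent

/-- Number of bridges of a graph. -/
noncomputable def numBridges {V : Type*} (G : SimpleGraph V) : ℕ :=
  {e : Sym2 V | G.IsBridge e}.ncard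

/-- Number of unordered pairs of vertices lying in distinct components. -/
noncomputable def cross {V : Type*} (G : SimpleGraph V) : ℕ :=
  {p : Sym2 V | ∃ u v : V, p = s(u, v) ∧ ¬ G.Reachable u v}.ncard

/-- Number of vertices outside a largest component. -/
noncomputable def frag {V : Type*} [Fintype V] (G : SimpleGraph V) : ℕ :=
  Fintype.card V - ⨆ c : G.ConnectedComponent, c.supp.ncard

/-- The graph obtained by deleting all bridges. -/
def debridge {V : Type*} (G : SimpleGraph V) : SimpleGraph V :=
  G.deleteEdges {e : Sym2 V | G.IsBridge e}

/-- The weight τ(G) = f(G̃) · λ^{e₀(G)} · ν^{κ(G)}. -/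
noncomputable def tau {V : Type*} (f : SimpleGraph V → ℝ) (lam nu : ℝ)
    (G : SimpleGraph V) : ℝ :=
  f (debridge G) * lam ^ numBridges G * nu ^ kappa G

/-- Adding the edge uv to a graph. -/
def addEdge {V : Type*} (G : SimpleGraph V) (u v : V) : SimpleGraph V :=
  G ⊔ SimpleGraph.fromEdgeSet {s(u, v)}

/-- A class of graphs is bridge-addable if adding an edge between two vertices in
distinct components of a member yields a member. -/
def BridgeAddable {V : Type*} (A : Set (SimpleGraph V)) : Prop :=
  ∀ G ∈ A, ∀ u v : V, ¬ G.Reachable u v → addEdge G u v ∈ A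

/-- P(Po(α) ≥ t), the upper tail of a Poisson distribution with mean α. -/
noncomputable def poissonTail (α : ℝ) (t : ℕ) : ℝ :=
  ∑' i : ℕ, if t ≤ i then Real.exp (-α) * α ^ i / (Nat.factorial i) else 0

/-- `R` is a set of roots for `G`: exactly one vertex of `R` in each component. -/
def IsRootSet {V : Type*} (G : SimpleGraph V) (R : Finset V) : Prop :=
  ∀ c : G.ConnectedComponent, ∃! v : V, v ∈ R ∧ G.connectedComponentMk v = c

/-- The rooted graphs (graph together with a choice of one root per component)
arising from members of `A`. -/
noncomputable def rootedSet {n : ℕ} (A : Finset (SimpleGraph (Fin n))) :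
    Finset (SimpleGraph (Fin n) × Finset (Fin n)) :=
  (A ×ˢ Finset.univ).filter (fun P => IsRootSet P.1 P.2)

open SimpleGraph Finset
section Aux
variable {V : Type*}

/-- Walk-splitting: any walk in `G` from `x` to `a` yields, after deleting edge `s(u,v)`,
reachability from `x` to `a`, `u`, or `v`. -/
lemma reach_delete_split {G : SimpleGraph V} {u v x a : V} (p : G.Walk x a) :
    (G.deleteEdges {s(u,v)}).Reachable x a ∨ (G.deleteEdges {s(u,v)}).Reachable x u ∨
      (G.deleteEdges {s(u,v)}).Reachable x v := by
  induction p with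
  | nil => exact Or.inl (Reachable.refl _)
  | @cons x y a h q ih =>
    by_cases he : s(x, y) = s(u, v)
    · rw [Sym2.eq_iff] at he
      rcases he with ⟨rfl, rfl⟩ | ⟨rfl, rfl⟩
      · exact Or.inr (Or.inl (Reachable.refl _))
      · exact Or.inr (Or.inr (Reachable.refl _))
    · have hadj : (G.deleteEdges {s(u,v)}).Adj x y := by
        rw [SimpleGraph.deleteEdges_adj]
        exact ⟨h, by simpa using he⟩
      rcases ih with h1 | h1 | h1
      · exact Or.inl (hadj.reachable.trans h1)
      · exact Or.inr (Or.inl (hadj.reachable.trans h1))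
      · exact Or.inr (Or.inr (hadj.reachable.trans h1))

lemma reach_sup_edge {G : SimpleGraph V} {u v a b : V}
    (h : (G ⊔ edge u v).Reachable a b) :
    G.Reachable a b ∨ (G.Reachable a u ∧ G.Reachable v b) ∨
      (G.Reachable a v ∧ G.Reachable u b) := by
  obtain ⟨p⟩ := h
  induction p with
  | nil => exact Or.inl (Reachable.refl _)
  | @cons a y b h q ih =>
    rcases h with h | h
    · rcases ih with h1 | ⟨h1, h2⟩ | ⟨h1, h2⟩
      · exact Or.inl (h.reachable.trans h1)
      · exact Or.inr (Or.inl ⟨h.reachable.trans h1, h2⟩)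
      · exact Or.inr (Or.inr ⟨h.reachable.trans h1, h2⟩)
    · rw [edge_adj] at h
      rcases h.1 with ⟨rfl, rfl⟩ | ⟨rfl, rfl⟩
      · rcases ih with h1 | ⟨h1, h2⟩ | ⟨h1, h2⟩
        · exact Or.inr (Or.inl ⟨Reachable.refl _, h1⟩)
        · exact Or.inr (Or.inl ⟨Reachable.refl _, h2⟩)
        · exact Or.inl h2
      · rcases ih with h1 | ⟨h1, h2⟩ | ⟨h1, h2⟩
        · exact Or.inr (Or.inr ⟨Reachable.refl _, h1⟩)
        · exact Or.inl h2
        · exact Or.inr (Or.inr ⟨Reachable.refl _, h2⟩)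


lemma delete_sup_edge {G : SimpleGraph V} {u v : V} (h : ¬ G.Adj u v) :
    (G ⊔ edge u v).deleteEdges {s(u,v)} = G := by
  ext a b
  simp only [deleteEdges_adj, sup_adj, edge_adj, Set.mem_singleton_iff]
  constructor
  · rintro ⟨h1 | h1, h2⟩
    · exact h1
    · exfalso; apply h2; rcases h1.1 with ⟨rfl, rfl⟩ | ⟨rfl, rfl⟩ <;> simp [Sym2.eq_swap]
  · intro hab
    refine ⟨Or.inl hab, fun he => ?_⟩
    rw [Sym2.eq_iff] at he
    rcases he with ⟨rfl, rfl⟩ | ⟨rfl, rfl⟩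
    · exact h hab
    · exact h hab.symm

lemma sup_delete_edge {G : SimpleGraph V} {u v : V} (h : G.Adj u v) :
    (G.deleteEdges {s(u,v)}) ⊔ edge u v = G := by
  ext a b
  simp only [deleteEdges_adj, sup_adj, edge_adj, Set.mem_singleton_iff]
  constructor
  · rintro (⟨h1, _⟩ | ⟨h1, _⟩)
    · exact h1
    · rcases h1 with ⟨rfl, rfl⟩ | ⟨rfl, rfl⟩
      · exact h
      · exact h.symm
  · intro hab
    by_cases he : s(a,b) = s(u,v)
    · rw [Sym2.eq_iff] at he
      rcases he with ⟨rfl, rfl⟩ | ⟨rfl, rfl⟩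
      · exact Or.inr ⟨Or.inl ⟨rfl, rfl⟩, hab.ne⟩
      · exact Or.inr ⟨Or.inr ⟨rfl, rfl⟩, hab.ne⟩
    · exact Or.inl ⟨hab, he⟩

lemma isAcyclic_mono {G H : SimpleGraph V} (hle : G ≤ H) (hH : H.IsAcyclic) : G.IsAcyclic :=
  fun _ c hc => hH (c.mapLe hle) (hc.mapLe hle)

lemma isAcyclic_sup_edge {G : SimpleGraph V} {u v : V} (hr : ¬ G.Reachable u v)
    (hG : G.IsAcyclic) : (G ⊔ edge u v).IsAcyclic := by
  have hne : u ≠ v := fun h => hr (h ▸ Reachable.refl u)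
  have hadj : ¬ G.Adj u v := fun h => hr h.reachable
  intro x c hc
  by_cases he : s(u,v) ∈ c.edges
  · have hadj2 : (G ⊔ edge u v).Adj u v := by
      rw [sup_adj, edge_adj]; exact Or.inr ⟨Or.inl ⟨rfl, rfl⟩, hne⟩
    have := (adj_and_reachable_delete_edges_iff_exists_cycle.mpr ⟨x, c, hc, he⟩).2
    rw [delete_sup_edge hadj] at this
    exact hr this
  · have hsub : ∀ e ∈ c.edges, e ∈ G.edgeSet := by
      intro e hec
      have : e ∈ (G ⊔ edge u v).edgeSet := c.edges_subset_edgeSet hec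
      rw [edgeSet_sup] at this
      rcases this with h1 | h1
      · exact h1
      · rw [edge_edgeSet_of_ne hne] at h1
        exact absurd (h1 ▸ hec) he
    exact hG (c.transfer G hsub) (hc.transfer hsub)



lemma kappa_sup_edge [Finite V] {G : SimpleGraph V} {u v : V} (hr : ¬ G.Reachable u v) :
    kappa (G ⊔ edge u v) + 1 = kappa G := by
  classical
  haveI : Fintype V := Fintype.ofFinite V
  haveI : Fintype G.ConnectedComponent := Fintype.ofFinite _
  haveI : Fintype (G ⊔ edge u v).ConnectedComponent := Fintype.ofFinite _
  set G' := G ⊔ edge u v with hG'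
  have hle : G ≤ G' := le_sup_left
  set f : {c : G.ConnectedComponent // c ≠ G.connectedComponentMk v} → G'.ConnectedComponent :=
    fun c => c.1.map (SimpleGraph.Hom.ofLE hle) with hf
  have hbij : Function.Bijective f := by
    constructor
    · rintro ⟨c1, hc1⟩ ⟨c2, hc2⟩ h
      obtain ⟨a, ha⟩ := c1.exists_rep
      obtain ⟨b, hb⟩ := c2.exists_rep
      subst ha hb
      simp only [hf, ConnectedComponent.map_mk] at h
      have hr' : G'.Reachable a b := (SimpleGraph.ConnectedComponent.eq).mp h
      rcases reach_sup_edge hr' with h1 | ⟨h1, h2⟩ | ⟨h1, h2⟩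
      · exact Subtype.ext (ConnectedComponent.sound h1)
      · exact absurd (ConnectedComponent.sound h2.symm) hc2
      · exact absurd (ConnectedComponent.sound h1) hc1
    · intro c
      obtain ⟨a, ha⟩ := c.exists_rep
      by_cases h : G.Reachable v a
      · refine ⟨⟨G.connectedComponentMk u, fun he => hr ((ConnectedComponent.eq).mp he)⟩, ?_⟩
        simp only [hf, ConnectedComponent.map_mk]
        rw [← ha]
        apply ConnectedComponent.sound
        have hadj : G'.Adj u v := by
          rw [hG', sup_adj, edge_adj]
          exact Or.inr ⟨Or.inl ⟨rfl, rfl⟩, fun hh => hr (hh ▸ Reachable.refl u)⟩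
        exact hadj.reachable.trans (h.mono hle)
      · refine ⟨⟨G.connectedComponentMk a, fun he => h ((ConnectedComponent.eq).mp he).symm⟩, ?_⟩
        simp only [hf, ConnectedComponent.map_mk]
        rw [← ha]
        rfl
  have h1 : kappa G' = Nat.card {c : G.ConnectedComponent // c ≠ G.connectedComponentMk v} :=
    (Nat.card_eq_of_bijective f hbij).symm
  show Nat.card G'.ConnectedComponent + 1 = Nat.card G.ConnectedComponent
  rw [show Nat.card G'.ConnectedComponent = kappa G' from rfl, h1,
    Nat.card_eq_fintype_card, Nat.card_eq_fintype_card]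
  rw [Fintype.card_subtype_compl]
  have h2 : Fintype.card {c : G.ConnectedComponent // c = G.connectedComponentMk v} = 1 :=
    Fintype.card_subtype_eq _
  rw [h2]
  have h3 : 1 ≤ Fintype.card G.ConnectedComponent :=
    Fintype.card_pos_iff.mpr ⟨G.connectedComponentMk v⟩
  omega

lemma kappa_bot (n : ℕ) : kappa (⊥ : SimpleGraph (Fin n)) = n := by
  rw [kappa, ← Nat.card_eq_of_bijective (SimpleGraph.connectedComponentMk ⊥), Nat.card_eq_fintype_card, Fintype.card_fin]
  constructor
  · intro a b h
    simpa using (SimpleGraph.ConnectedComponent.eq).mp h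
  · exact fun c => c.exists_rep

lemma acyclic_card {n : ℕ} : ∀ (m : ℕ) (G : SimpleGraph (Fin n)), G.edgeSet.ncard = m →
    G.IsAcyclic → G.edgeSet.ncard + kappa G = n := by
  intro m
  induction m with
  | zero =>
    intro G hm _
    have : G.edgeSet = ∅ := (Set.ncard_eq_zero (Set.toFinite _)).mp hm  -- needs finite?
    rw [hm, SimpleGraph.edgeSet_eq_empty.mp this, kappa_bot, zero_add]
  | succ m ih =>
    intro G hm hac
    have hne : G.edgeSet.Nonempty := Set.nonempty_of_ncard_ne_zero (by omega)
    obtain ⟨e, he⟩ := hne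
    induction e with
    | h a b =>
    have hadj : G.Adj a b := he
    set H := G.deleteEdges {s(a,b)} with hH
    have hHadj : ¬ H.Adj a b := by simp [hH, SimpleGraph.deleteEdges_adj]
    have hsup : H ⊔ edge a b = G := sup_delete_edge hadj
    have hHac : H.IsAcyclic := isAcyclic_mono (SimpleGraph.deleteEdges_le _) hac
    have hbr : G.IsBridge s(a,b) := isAcyclic_iff_forall_adj_isBridge.mp hac hadj
    have hHr : ¬ H.Reachable a b := hbr
    have hedge : H.edgeSet = G.edgeSet \ {s(a,b)} := by
      rw [hH]; exact SimpleGraph.edgeSet_deleteEdges _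
    have hcard : H.edgeSet.ncard = m := by
      rw [hedge, Set.ncard_diff_singleton_of_mem he]
      omega
    have hkap : kappa G + 1 = kappa H := by
      rw [← hsup]; exact kappa_sup_edge hHr
    have := ih H hcard hHac
    omega
open Finset

lemma root_exists {G : SimpleGraph V} {R : Finset V} (h : IsRootSet G R) (a : V) :
    ∃ x ∈ R, G.Reachable x a := by
  obtain ⟨x, ⟨hx1, hx2⟩, _⟩ := h (G.connectedComponentMk a)
  exact ⟨x, hx1, (ConnectedComponent.eq).mp hx2⟩

lemma root_unique {G : SimpleGraph V} {R : Finset V} (h : IsRootSet G R) {x y : V}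
    (hx : x ∈ R) (hy : y ∈ R) (hxy : G.Reachable x y) : x = y := by
  obtain ⟨z, _, hz⟩ := h (G.connectedComponentMk y)
  rw [hz x ⟨hx, ConnectedComponent.sound hxy⟩, hz y ⟨hy, rfl⟩]

lemma card_rootSet {n : ℕ} {G : SimpleGraph (Fin n)} {R : Finset (Fin n)}
    (h : IsRootSet G R) : R.card = kappa G := by
  haveI : Fintype G.ConnectedComponent := Fintype.ofFinite _
  rw [kappa, Nat.card_eq_fintype_card, ← Finset.card_univ]
  apply Finset.card_bij (fun r _ => G.connectedComponentMk r)
  · intro r _; exact Finset.mem_univ _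
  · intro r1 h1 r2 h2 he
    exact root_unique h h1 h2 ((ConnectedComponent.eq).mp he)
  · intro c _
    obtain ⟨x, ⟨hx1, hx2⟩, _⟩ := h c
    exact ⟨x, hx1, hx2⟩

lemma sum_comp_card {n : ℕ} {G : SimpleGraph (Fin n)} {R : Finset (Fin n)}
    (h : IsRootSet G R) :
    ∑ r ∈ R, (univ.filter (fun u => G.Reachable r u)).card = n := by
  haveI : Fintype G.ConnectedComponent := Fintype.ofFinite _
  have key : ∑ r ∈ R, (univ.filter (fun u => G.Reachable r u)).card
      = ∑ c : G.ConnectedComponent, (univ.filter (fun u => G.connectedComponentMk u = c)).card := by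
    apply Finset.sum_bij (fun r _ => G.connectedComponentMk r)
    · intro r _; exact Finset.mem_univ _
    · intro r1 h1 r2 h2 he
      exact root_unique h h1 h2 ((ConnectedComponent.eq).mp he)
    · intro c _
      obtain ⟨x, ⟨hx1, hx2⟩, _⟩ := h c
      exact ⟨x, hx1, hx2⟩
    · intro r _
      congr 1
      apply Finset.filter_congr
      intro u _
      rw [ConnectedComponent.eq]
      exact reachable_comm
  rw [key]
  have h2 := Finset.card_eq_sum_card_fiberwise (f := G.connectedComponentMk)
    (s := (univ : Finset (Fin n))) (t := univ) (fun x _ => Finset.mem_univ _)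
  simpa using h2.symm

lemma count1 {n k : ℕ} {G : SimpleGraph (Fin n)} {R : Finset (Fin n)}
    (h : IsRootSet G R) (hκ : kappa G = k + 1) :
    ∑ r : Fin n, (univ.filter (fun u => r ∈ R ∧ ¬ G.Reachable r u)).card = k * n := by
  rw [← Finset.sum_subset (Finset.subset_univ R) (by
    intro r _ hr
    rw [Finset.card_eq_zero, Finset.filter_eq_empty_iff]
    exact fun _ _ hc => hr hc.1)]
  have hstep : ∀ r ∈ R, (univ.filter (fun u => r ∈ R ∧ ¬ G.Reachable r u)).card
      = n - (univ.filter (fun u => G.Reachable r u)).card := by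
    intro r hr
    have : (univ.filter (fun u => r ∈ R ∧ ¬ G.Reachable r u))
        = (univ.filter (fun u => ¬ G.Reachable r u)) := by
      apply Finset.filter_congr; intro u _; simp [hr]
    rw [this]
    have := Finset.card_filter_add_card_filter_not (s := (univ : Finset (Fin n)))
      (p := fun u => G.Reachable r u)
    simp only [Finset.card_univ, Fintype.card_fin] at this
    omega
  rw [Finset.sum_congr rfl hstep]
  have h1 : ∑ r ∈ R, (n - (univ.filter (fun u => G.Reachable r u)).card)
        + ∑ r ∈ R, (univ.filter (fun u => G.Reachable r u)).card = R.card * n := by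
    rw [← Finset.sum_add_distrib]
    have hterm : ∀ r ∈ R, n - (univ.filter (fun u => G.Reachable r u)).card
        + (univ.filter (fun u => G.Reachable r u)).card = n := by
      intro r _
      have : (univ.filter (fun u => G.Reachable r u)).card ≤ n := by
        simpa using Finset.card_filter_le univ (fun u => G.Reachable r u)
      omega
    rw [Finset.sum_congr rfl hterm, Finset.sum_const, smul_eq_mul]
  rw [sum_comp_card h, card_rootSet h, hκ] at h1
  have : (k+1) * n = k * n + n := by ring
  omega
-- root-set transfer lemmas
lemma isRootSet_sup_edge {V : Type*} [DecidableEq V] {G : SimpleGraph V} {R : Finset V} {r u : V}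
    (h : IsRootSet G R) (hrR : r ∈ R) (hru : ¬ G.Reachable r u) :
    IsRootSet (G ⊔ SimpleGraph.edge r u) (R.erase r) := by
  have hne : r ≠ u := fun hh => hru (hh ▸ Reachable.refl r)
  have hadj : (G ⊔ SimpleGraph.edge r u).Adj r u := by
    rw [sup_adj, edge_adj]; exact Or.inr ⟨Or.inl ⟨rfl, rfl⟩, hne⟩
  set G' := G ⊔ SimpleGraph.edge r u with hG'
  have hle : G ≤ G' := le_sup_left
  intro c
  obtain ⟨a, ha⟩ := c.exists_rep
  have ha' : G'.connectedComponentMk a = c := ha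
  by_cases hcase : G'.Reachable a r
  · -- the merged component; root = root of u's G-component
    obtain ⟨x, hxR, hxu⟩ := root_exists h u
    have hxr : x ≠ r := fun hh => hru (hh ▸ hxu)
    refine ⟨x, ⟨Finset.mem_erase.mpr ⟨hxr, hxR⟩, ?_⟩, ?_⟩
    · rw [← ha']
      apply ConnectedComponent.sound
      exact ((hxu.mono hle).trans hadj.symm.reachable).trans hcase.symm
    · rintro y ⟨hy, hyc⟩
      rw [Finset.mem_erase] at hy
      have hya : G'.Reachable y a := by
        rw [← ha'] at hyc; exact (ConnectedComponent.eq).mp hyc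
      have hyu : G'.Reachable y u := (hya.trans hcase).trans hadj.reachable
      rcases reach_sup_edge hyu with h1 | ⟨h1, _⟩ | ⟨h1, _⟩
      · exact root_unique h hy.2 hxR (h1.trans hxu.symm)
      · exact absurd (root_unique h hy.2 hrR h1) hy.1
      · exact root_unique h hy.2 hxR (h1.trans hxu.symm)
  · -- untouched component; root = root of a's G-component
    obtain ⟨x, hxR, hxa⟩ := root_exists h a
    have hxr : x ≠ r := by
      rintro rfl
      exact hcase ((hxa.mono hle).symm)
    refine ⟨x, ⟨Finset.mem_erase.mpr ⟨hxr, hxR⟩, ?_⟩, ?_⟩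
    · rw [← ha']
      exact ConnectedComponent.sound (hxa.mono hle)
    · rintro y ⟨hy, hyc⟩
      rw [Finset.mem_erase] at hy
      have hya : G'.Reachable y a := by
        rw [← ha'] at hyc; exact (ConnectedComponent.eq).mp hyc
      rcases reach_sup_edge hya with h1 | ⟨h1, h2⟩ | ⟨h1, h2⟩
      · exact root_unique h hy.2 hxR (h1.trans hxa.symm)
      · exact absurd ((h2.mono hle).symm.trans hadj.symm.reachable) hcase
      · exact absurd ((h2.mono hle).symm) hcase

lemma isRootSet_delete_edge {V : Type*} [DecidableEq V] {G : SimpleGraph V} {R : Finset V} {r u : V}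
    (h : IsRootSet G R) (hac : G.IsAcyclic) (he : s(r,u) ∈ G.edgeSet)
    (hcond : ∀ x ∈ R, ¬ (G.deleteEdges {s(r,u)}).Reachable x r) :
    IsRootSet (G.deleteEdges {s(r,u)}) (insert r R) ∧ r ∉ R := by
  set H := G.deleteEdges {s(r,u)} with hH
  have hadj : G.Adj r u := he
  have hbr : ¬ H.Reachable r u := (isAcyclic_iff_forall_adj_isBridge.mp hac hadj)
  have hrR : r ∉ R := fun hh => hcond r hh (Reachable.refl r)
  have hHle : H ≤ G := SimpleGraph.deleteEdges_le _
  refine ⟨?_, hrR⟩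
  intro c
  obtain ⟨a, ha⟩ := c.exists_rep
  have ha' : H.connectedComponentMk a = c := ha
  by_cases hcase : H.Reachable a r
  · refine ⟨r, ⟨Finset.mem_insert_self _ _, ?_⟩, ?_⟩
    · rw [← ha']; exact ConnectedComponent.sound hcase.symm
    · rintro y ⟨hy, hyc⟩
      rcases Finset.mem_insert.mp hy with rfl | hy'
      · rfl
      · exfalso
        have hya : H.Reachable y a := by
          rw [← ha'] at hyc; exact (ConnectedComponent.eq).mp hyc
        exact hcond y hy' (hya.trans hcase)
  · obtain ⟨x, hxR, hxa⟩ := root_exists h a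
    have hxa' : H.Reachable x a := by
      obtain ⟨p⟩ := hxa
      rcases reach_delete_split (u := r) (v := u) p with h1 | h1 | h1
      · exact h1
      · exact absurd h1 (hcond x hxR)
      · -- H.Reachable x u; then a reachable from u or contradiction
        rcases reach_delete_split (u := r) (v := u) p.reverse with h2 | h2 | h2
        · exact h2.symm
        · exact absurd h2 (fun hh => hcase hh)
        · exact (h1.trans h2.symm)
    refine ⟨x, ⟨Finset.mem_insert_of_mem hxR, ?_⟩, ?_⟩
    · rw [← ha']; exact ConnectedComponent.sound hxa'
    · rintro y ⟨hy, hyc⟩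
      have hya : H.Reachable y a := by
        rw [← ha'] at hyc; exact (ConnectedComponent.eq).mp hyc
      rcases Finset.mem_insert.mp hy with rfl | hy'
      · exact absurd hya.symm hcase
      · exact root_unique h hy' hxR ((hya.mono hHle).trans hxa.symm)
lemma not_both_orient {V : Type*} {G : SimpleGraph V} {R : Finset V}
    (h : IsRootSet G R) {r u : V}
    (h1 : ∀ x ∈ R, ¬ (G.deleteEdges {s(r,u)}).Reachable x r)
    (h2 : ∀ x ∈ R, ¬ (G.deleteEdges {s(u,r)}).Reachable x u) : False := by
  rw [show s(u,r) = s(r,u) from Sym2.eq_swap] at h2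
  obtain ⟨x, hxR, hxr⟩ := root_exists h r
  obtain ⟨p⟩ := hxr
  rcases reach_delete_split (u := r) (v := u) p with hh | hh | hh
  · exact h1 x hxR hh
  · exact h1 x hxR hh
  · exact h2 x hxR hh

lemma exists_orient {V : Type*} {G : SimpleGraph V} {R : Finset V}
    (h : IsRootSet G R) (hac : G.IsAcyclic) {a b : V} (hadj : G.Adj a b) :
    (∀ x ∈ R, ¬ (G.deleteEdges {s(a,b)}).Reachable x a) ∨
      (∀ x ∈ R, ¬ (G.deleteEdges {s(b,a)}).Reachable x b) := by
  set H := G.deleteEdges {s(a,b)} with hH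
  have hswap : G.deleteEdges {s(b,a)} = H := by rw [hH, Sym2.eq_swap]
  have hbr : ¬ H.Reachable a b := (isAcyclic_iff_forall_adj_isBridge.mp hac hadj)
  have hle : H ≤ G := SimpleGraph.deleteEdges_le _
  obtain ⟨x, hxR, hxa⟩ := root_exists h a
  have hsplit : H.Reachable x a ∨ H.Reachable x b := by
    obtain ⟨p⟩ := hxa
    rcases reach_delete_split (u := a) (v := b) p with hh | hh | hh
    · exact Or.inl hh
    · exact Or.inl hh
    · exact Or.inr hh
  rcases hsplit with hxa' | hxb'
  · right
    rw [hswap]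
    intro y hyR hyb
    have hyx : y = x := root_unique h hyR hxR
      (((hyb.mono hle).trans hadj.symm.reachable).trans hxa.symm)
    subst hyx
    exact hbr (hxa'.symm.trans hyb)
  · left
    intro y hyR hya
    have hyx : y = x := root_unique h hyR hxR ((hya.mono hle).trans hxa.symm)
    subst hyx
    exact hbr (hya.symm.trans hxb')

lemma count2 {n : ℕ} {G : SimpleGraph (Fin n)} {R : Finset (Fin n)}
    (h : IsRootSet G R) (hac : G.IsAcyclic) :
    ∑ r : Fin n, (univ.filter (fun u => s(r,u) ∈ G.edgeSet ∧
        ∀ x ∈ R, ¬ (G.deleteEdges {s(r,u)}).Reachable x r)).card = G.edgeSet.ncard := by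
  have hstep : ∑ r : Fin n, (univ.filter (fun u => s(r,u) ∈ G.edgeSet ∧
        ∀ x ∈ R, ¬ (G.deleteEdges {s(r,u)}).Reachable x r)).card
      = ((univ ×ˢ univ : Finset (Fin n × Fin n)).filter (fun q => s(q.1,q.2) ∈ G.edgeSet ∧
        ∀ x ∈ R, ¬ (G.deleteEdges {s(q.1,q.2)}).Reachable x q.1)).card := by
    rw [Finset.card_filter, Finset.sum_product]
    exact Finset.sum_congr rfl (fun r _ => (Finset.card_filter _ _))
  rw [hstep, show G.edgeSet.ncard = G.edgeFinset.card from by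
    rw [← Set.ncard_coe_finset, SimpleGraph.coe_edgeFinset]]
  apply Finset.card_bij (fun q _ => s(q.1, q.2))
  · intro q hq
    rw [Finset.mem_filter] at hq
    exact SimpleGraph.mem_edgeFinset.mpr hq.2.1
  · rintro ⟨r1, u1⟩ hq1 ⟨r2, u2⟩ hq2 he
    rw [Finset.mem_filter] at hq1 hq2
    simp only [Sym2.eq_iff] at he
    rcases he with ⟨rfl, rfl⟩ | ⟨rfl, rfl⟩
    · rfl
    · exact absurd (not_both_orient h hq2.2.2 hq1.2.2) not_false
  · intro e he
    rw [SimpleGraph.mem_edgeFinset] at he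
    induction e with
    | h a b =>
    have hadj : G.Adj a b := he
    rcases exists_orient h hac hadj with h1 | h1
    · exact ⟨(a, b), Finset.mem_filter.mpr ⟨Finset.mem_univ _, he, h1⟩, rfl⟩
    · exact ⟨(b, a), Finset.mem_filter.mpr ⟨Finset.mem_univ _,
        (Sym2.eq_swap ▸ he), h1⟩, Sym2.eq_swap⟩


end Aux

/-- for the class of rooted forests on `[n]` with weighting
`τ(F) = λ^{e(F)}·ν^{κ(F)}` and `R°_n ∈_τ F°`,
`P(κ(R°_n) = k+1) = ((n−k)/n)·(ν/(λk))·P(κ(R°_n) = k)` for each `k ≥ 1`. -/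
theorem stmt15 {n : ℕ} (hn : 0 < n) (lam nu : ℝ) (hlam : 0 < lam) (hnu : 0 < nu)
    (k : ℕ) (hk : 1 ≤ k) :
    ∑ P ∈ (rootedSet ((Finset.univ : Finset (SimpleGraph (Fin n))).filter
            (fun G => G.IsAcyclic))).filter (fun P => kappa P.1 = k + 1),
        lam ^ P.1.edgeSet.ncard * nu ^ kappa P.1 =
      ((n : ℝ) - k) / n * (nu / (lam * k)) *
        ∑ P ∈ (rootedSet ((Finset.univ : Finset (SimpleGraph (Fin n))).filter
            (fun G => G.IsAcyclic))).filter (fun P => kappa P.1 = k),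
          lam ^ P.1.edgeSet.ncard * nu ^ kappa P.1 := by
  classical
  set w : SimpleGraph (Fin n) × Finset (Fin n) → ℝ :=
    fun P => lam ^ P.1.edgeSet.ncard * nu ^ kappa P.1 with hw
  set FF := (Finset.univ : Finset (SimpleGraph (Fin n))).filter (fun G => G.IsAcyclic) with hFF
  set A1 := (rootedSet FF).filter (fun P => kappa P.1 = k + 1) with hA1
  set A0 := (rootedSet FF).filter (fun P => kappa P.1 = k) with hA0
  have memA : ∀ j : ℕ, ∀ P ∈ (rootedSet FF).filter (fun P => kappa P.1 = j),
      P.1.IsAcyclic ∧ IsRootSet P.1 P.2 ∧ kappa P.1 = j := by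
    intro j P hP
    rw [Finset.mem_filter, rootedSet, Finset.mem_filter, Finset.mem_product, hFF,
      Finset.mem_filter] at hP
    exact ⟨hP.1.1.1.2, hP.1.2, hP.2⟩
  set T1 : Finset ((SimpleGraph (Fin n) × Finset (Fin n)) × (Fin n × Fin n)) :=
    (A1 ×ˢ (Finset.univ : Finset (Fin n × Fin n))).filter
      (fun t => t.2.1 ∈ t.1.2 ∧ ¬ t.1.1.Reachable t.2.1 t.2.2) with hT1
  set T2 : Finset ((SimpleGraph (Fin n) × Finset (Fin n)) × (Fin n × Fin n)) :=
    (A0 ×ˢ (Finset.univ : Finset (Fin n × Fin n))).filter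
      (fun t => s(t.2.1, t.2.2) ∈ t.1.1.edgeSet ∧
        ∀ x ∈ t.1.2, ¬ (t.1.1.deleteEdges {s(t.2.1, t.2.2)}).Reachable x t.2.1) with hT2
  -- E1
  have E1 : ∑ t ∈ T1, w t.1 = ((k * n : ℕ) : ℝ) * ∑ P ∈ A1, w P := by
    rw [hT1, Finset.sum_filter, Finset.sum_product, Finset.mul_sum]
    apply Finset.sum_congr rfl
    intro P hP
    obtain ⟨hac, hroot, hκ⟩ := memA (k+1) P hP
    have hcount : ((Finset.univ : Finset (Fin n × Fin n)).filter
        (fun q => q.1 ∈ P.2 ∧ ¬ P.1.Reachable q.1 q.2)).card = k * n := by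
      rw [Finset.card_filter, ← Finset.univ_product_univ, Finset.sum_product]
      rw [Finset.sum_congr rfl (fun r (_ : r ∈ Finset.univ) => (Finset.card_filter
        (fun u => r ∈ P.2 ∧ ¬ P.1.Reachable r u) Finset.univ).symm)]
      exact count1 hroot hκ
    calc ∑ q ∈ (Finset.univ : Finset (Fin n × Fin n)),
          (if q.1 ∈ P.2 ∧ ¬ P.1.Reachable q.1 q.2 then w P else 0)
        = ∑ _q ∈ (Finset.univ : Finset (Fin n × Fin n)).filter
            (fun q => q.1 ∈ P.2 ∧ ¬ P.1.Reachable q.1 q.2), w P := (Finset.sum_filter _ _).symm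
      _ = ((k * n : ℕ) : ℝ) * w P := by
          rw [Finset.sum_const, hcount, nsmul_eq_mul]
  -- E2
  have E2 : ∑ t ∈ T2, w t.1 = ((n : ℝ) - k) * ∑ P ∈ A0, w P := by
    rw [hT2, Finset.sum_filter, Finset.sum_product, Finset.mul_sum]
    apply Finset.sum_congr rfl
    intro P hP
    obtain ⟨hac, hroot, hκ⟩ := memA k P hP
    have hcount : ((Finset.univ : Finset (Fin n × Fin n)).filter
        (fun q => s(q.1, q.2) ∈ P.1.edgeSet ∧
          ∀ x ∈ P.2, ¬ (P.1.deleteEdges {s(q.1, q.2)}).Reachable x q.1)).card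
        = P.1.edgeSet.ncard := by
      rw [Finset.card_filter, ← Finset.univ_product_univ, Finset.sum_product]
      rw [Finset.sum_congr rfl (fun r (_ : r ∈ Finset.univ) => (Finset.card_filter
        (fun u => s(r, u) ∈ P.1.edgeSet ∧
          ∀ x ∈ P.2, ¬ (P.1.deleteEdges {s(r, u)}).Reachable x r) Finset.univ).symm)]
      exact count2 hroot hac
    have hnk : P.1.edgeSet.ncard + k = n := by
      have := acyclic_card P.1.edgeSet.ncard P.1 rfl hac
      omega
    have hcast : ((P.1.edgeSet.ncard : ℕ) : ℝ) = (n : ℝ) - k := by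
      have := congrArg (fun m : ℕ => (m : ℝ)) hnk
      push_cast at this
      linarith
    calc ∑ q ∈ (Finset.univ : Finset (Fin n × Fin n)),
          (if s(q.1, q.2) ∈ P.1.edgeSet ∧
            ∀ x ∈ P.2, ¬ (P.1.deleteEdges {s(q.1, q.2)}).Reachable x q.1 then w P else 0)
        = ∑ _q ∈ (Finset.univ : Finset (Fin n × Fin n)).filter
            (fun q => s(q.1, q.2) ∈ P.1.edgeSet ∧
              ∀ x ∈ P.2, ¬ (P.1.deleteEdges {s(q.1, q.2)}).Reachable x q.1), w P :=
          (Finset.sum_filter _ _).symm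
      _ = ((n : ℝ) - k) * w P := by
          rw [Finset.sum_const, hcount, nsmul_eq_mul, hcast]
  -- E3
  have E3 : ∑ t ∈ T1, lam * w t.1 = ∑ t ∈ T2, nu * w t.1 := by
    apply Finset.sum_nbij'
      (i := fun t => ((t.1.1 ⊔ SimpleGraph.edge t.2.1 t.2.2, t.1.2.erase t.2.1), t.2))
      (j := fun t => ((t.1.1.deleteEdges {s(t.2.1, t.2.2)}, insert t.2.1 t.1.2), t.2))
    · -- hi
      rintro ⟨⟨G, R⟩, r, u⟩ ht
      rw [hT1, Finset.mem_filter, Finset.mem_product] at ht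
      obtain ⟨⟨hPA, -⟩, hrR, hru⟩ := ht
      obtain ⟨hac, hroot, hκ⟩ := memA (k+1) _ hPA
      dsimp only at hrR hru hac hroot hκ
      have hne : r ≠ u := fun hh => hru (hh ▸ Reachable.refl r)
      have hGadj : ¬ G.Adj r u := fun hh => hru hh.reachable
      have hac' : (G ⊔ SimpleGraph.edge r u).IsAcyclic := isAcyclic_sup_edge hru hac
      have hroot' : IsRootSet (G ⊔ SimpleGraph.edge r u) (R.erase r) :=
        isRootSet_sup_edge hroot hrR hru
      have hκ' : kappa (G ⊔ SimpleGraph.edge r u) = k := by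
        have := kappa_sup_edge hru
        omega
      rw [hT2, Finset.mem_filter, Finset.mem_product]
      dsimp only
      refine ⟨⟨?_, Finset.mem_univ _⟩, ?_, ?_⟩
      · rw [hA0, Finset.mem_filter, rootedSet, Finset.mem_filter, Finset.mem_product, hFF,
          Finset.mem_filter]
        exact ⟨⟨⟨⟨Finset.mem_univ _, hac'⟩, Finset.mem_univ _⟩, hroot'⟩, hκ'⟩
      · rw [SimpleGraph.mem_edgeSet, sup_adj, edge_adj]
        exact Or.inr ⟨Or.inl ⟨rfl, rfl⟩, hne⟩
      · intro x hx
        rw [delete_sup_edge hGadj]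
        intro hxr
        rw [Finset.mem_erase] at hx
        exact hx.1 (root_unique hroot hx.2 hrR hxr)
    · -- hj
      rintro ⟨⟨G, R⟩, r, u⟩ ht
      rw [hT2, Finset.mem_filter, Finset.mem_product] at ht
      obtain ⟨⟨hPA, -⟩, he, hcond⟩ := ht
      obtain ⟨hac, hroot, hκ⟩ := memA k _ hPA
      dsimp only at he hcond hac hroot hκ
      have hadj : G.Adj r u := he
      have hbr : ¬ (G.deleteEdges {s(r, u)}).Reachable r u :=
        (isAcyclic_iff_forall_adj_isBridge.mp hac hadj)
      obtain ⟨hroot', hrR'⟩ := isRootSet_delete_edge hroot hac he hcond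
      have hac' : (G.deleteEdges {s(r, u)}).IsAcyclic :=
        isAcyclic_mono (SimpleGraph.deleteEdges_le _) hac
      have hκ' : kappa (G.deleteEdges {s(r, u)}) = k + 1 := by
        have h1 := kappa_sup_edge hbr
        rw [sup_delete_edge hadj] at h1
        omega
      rw [hT1, Finset.mem_filter, Finset.mem_product]
      dsimp only
      refine ⟨⟨?_, Finset.mem_univ _⟩, Finset.mem_insert_self _ _, hbr⟩
      rw [hA1, Finset.mem_filter, rootedSet, Finset.mem_filter, Finset.mem_product, hFF,
        Finset.mem_filter]
      exact ⟨⟨⟨⟨Finset.mem_univ _, hac'⟩, Finset.mem_univ _⟩, hroot'⟩, hκ'⟩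
    · -- left_inv
      rintro ⟨⟨G, R⟩, r, u⟩ ht
      rw [hT1, Finset.mem_filter, Finset.mem_product] at ht
      obtain ⟨⟨hPA, -⟩, hrR, hru⟩ := ht
      dsimp only at hrR hru
      have hGadj : ¬ G.Adj r u := fun hh => hru hh.reachable
      simp only [Prod.mk.injEq]
      exact ⟨⟨delete_sup_edge hGadj, Finset.insert_erase hrR⟩, trivial⟩
    · -- right_inv
      rintro ⟨⟨G, R⟩, r, u⟩ ht
      rw [hT2, Finset.mem_filter, Finset.mem_product] at ht
      obtain ⟨⟨hPA, -⟩, he, hcond⟩ := ht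
      obtain ⟨hac, hroot, hκ⟩ := memA k _ hPA
      dsimp only at he hcond hac hroot hκ
      have hadj : G.Adj r u := he
      obtain ⟨-, hrR'⟩ := isRootSet_delete_edge hroot hac he hcond
      simp only [Prod.mk.injEq]
      exact ⟨⟨sup_delete_edge hadj, Finset.erase_insert hrR'⟩, trivial⟩
    · -- weights
      rintro ⟨⟨G, R⟩, r, u⟩ ht
      rw [hT1, Finset.mem_filter, Finset.mem_product] at ht
      obtain ⟨⟨hPA, -⟩, hrR, hru⟩ := ht
      obtain ⟨hac, hroot, hκ⟩ := memA (k+1) _ hPA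
      dsimp only at hrR hru hac hroot hκ
      have hne : r ≠ u := fun hh => hru (hh ▸ Reachable.refl r)
      have hGadj : ¬ G.Adj r u := fun hh => hru hh.reachable
      have hκ' : kappa (G ⊔ SimpleGraph.edge r u) = k := by
        have := kappa_sup_edge hru
        omega
      have hE : (G ⊔ SimpleGraph.edge r u).edgeSet.ncard = G.edgeSet.ncard + 1 := by
        have h1 : (G ⊔ SimpleGraph.edge r u).edgeSet = insert s(r, u) G.edgeSet := by
          rw [SimpleGraph.edgeSet_sup, edge_edgeSet_of_ne hne, Set.union_singleton]
        have hmem : s(r, u) ∉ G.edgeSet := fun hh => hGadj ((SimpleGraph.mem_edgeSet G).mp hh)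
        rw [h1, Set.ncard_insert_of_notMem hmem (Set.toFinite _)]
      simp only [hw]
      rw [hκ, hκ', hE, pow_succ, pow_succ]
      ring
  -- assemble
  show ∑ P ∈ A1, w P = ((n : ℝ) - k) / n * (nu / (lam * k)) * ∑ P ∈ A0, w P
  have hE3' : lam * (((k * n : ℕ) : ℝ) * ∑ P ∈ A1, w P)
      = nu * (((n : ℝ) - k) * ∑ P ∈ A0, w P) := by
    rw [← E1, ← E2, Finset.mul_sum, Finset.mul_sum]
    exact E3
  have hkn : ((k * n : ℕ) : ℝ) = (k : ℝ) * n := by push_cast; ring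
  rw [hkn] at hE3'
  have hk0 : (k : ℝ) ≠ 0 := Nat.cast_ne_zero.mpr (by omega)
  have hn0 : (n : ℝ) ≠ 0 := Nat.cast_ne_zero.mpr (by omega)
  have hl0 : lam ≠ 0 := ne_of_gt hlam
  have hS1 : (∑ P ∈ A1, w P) * (lam * ((k : ℝ) * n)) = nu * (((n : ℝ) - k) * ∑ P ∈ A0, w P) := by
    linear_combination hE3'
  have hpos : lam * ((k : ℝ) * n) ≠ 0 := by positivity
  have hrhs : ((n : ℝ) - k) / n * (nu / (lam * k)) * ∑ P ∈ A0, w P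
      = nu * (((n : ℝ) - k) * ∑ P ∈ A0, w P) / (lam * ((k : ℝ) * n)) := by
    field_simp
  rw [hrhs, eq_div_iff hpos]
  linear_combination hS1
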